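/- For k ≥ 2, in the brace B_k (underlying set ℤ/2^kℤ, addition the usual one, multiplication a ∘ b = a + b - 2ab): (a) {0,1} and the additive subgroup ⟨2⟩₊ of even elements are subgroups of the multiplicative group (B_k, ∘), and (B_k, ∘) is the internal direct product of {0,1} and ⟨2⟩₊; (b) the set of elements of multiplicative order at most 2 is exactly {0, 1, 2^{k-1}, 2^{k-1}+1}; (c) the multiplicative group of ⟨2⟩₊ is cyclic of order 2^{k-1}. -/

import Mathlib

private lemma sum_mod2 (x : ℤ) (hx : Odd x) (t : ℕ) :
    (∑ i ∈ Finset.range t, x ^ i) ≡ (t : ℤ) [ZMOD 2] := by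
  have hx1 : x ≡ 1 [ZMOD 2] := by
    obtain ⟨j, hj⟩ := hx
    exact Int.ModEq.symm (Int.modEq_iff_dvd.mpr ⟨j, by omega⟩)
  induction t with
  | zero => simp [Int.ModEq.refl]
  | succ n ih =>
    rw [Finset.sum_range_succ]
    push_cast
    calc (∑ i ∈ Finset.range n, x ^ i) + x ^ n ≡ n + 1^n [ZMOD 2] :=
          Int.ModEq.add ih (hx1.pow n)
      _ = (n:ℤ) + 1 := by ring

private lemma odd_geom_sum (x : ℤ) (hx : Odd x) (t : ℕ) (ht : Odd t) :
    Odd (∑ i ∈ Finset.range t, x ^ i) := by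
  have h := sum_mod2 x hx t
  have : (t:ℤ) % 2 = 1 := by
    obtain ⟨j, hj⟩ := ht; omega
  rw [Int.odd_iff]
  unfold Int.ModEq at h
  omega

/-- (-3)^(2^j) = 1 + 2^(j+2) * odd -/
private lemma neg_three_pow_two_pow (j : ℕ) :
    ∃ c : ℤ, Odd c ∧ (-3:ℤ) ^ (2 ^ j) = 1 + 2 ^ (j + 2) * c := by
  induction j with
  | zero => exact ⟨-1, ⟨-1, by ring⟩, by norm_num⟩
  | succ n ih =>
    obtain ⟨c, hc, h⟩ := ih
    refine ⟨c + 2 ^ (n + 1) * c ^ 2, ?_, ?_⟩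
    · obtain ⟨d, hd⟩ := hc
      exact ⟨d + 2 ^ n * c ^ 2, by rw [hd]; ring⟩
    · have : (-3:ℤ) ^ 2 ^ (n + 1) = ((-3:ℤ) ^ 2 ^ n) ^ 2 := by
        rw [← pow_mul, pow_succ]
      rw [this, h]; ring

/-- for odd t : (1 + 2^s * c)^t = 1 + 2^s * odd, c odd -/
private lemma odd_pow_one_add (s : ℕ) (hs : 1 ≤ s) (c : ℤ) (hc : Odd c) (t : ℕ) (ht : Odd t) :
    ∃ e : ℤ, Odd e ∧ (1 + 2 ^ s * c) ^ t = 1 + 2 ^ s * e := by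
  set x : ℤ := 1 + 2 ^ s * c with hxdef
  have hxodd : Odd x := by
    obtain ⟨u, hu⟩ : (2:ℤ) ∣ 2 ^ s := dvd_pow_self 2 (by omega)
    exact ⟨u * c, by rw [hxdef, hu]; ring⟩
  have hgeom := geom_sum_mul x t
  have hsum := odd_geom_sum x hxodd t ht
  refine ⟨c * (∑ i ∈ Finset.range t, x ^ i), hc.mul hsum, ?_⟩
  have : x ^ t - 1 = 2 ^ s * (c * (∑ i ∈ Finset.range t, x ^ i)) := by
    rw [← hgeom]; rw [hxdef]; ring
  linarith [this]

/-- key: for 0 < d, d = 2^j * t with t odd, (-3)^d - 1 = 2^(j+2) * odd -/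
private lemma neg_three_pow_sub_one (d : ℕ) (hd : 0 < d) :
    ∃ j : ℕ, 2 ^ j ≤ d ∧ ∃ e : ℤ, Odd e ∧ (-3:ℤ) ^ d - 1 = 2 ^ (j + 2) * e := by
  obtain ⟨j, t, ht2, hdt⟩ := Nat.exists_eq_pow_mul_and_not_dvd hd.ne' 2 (by norm_num)
  obtain ⟨c, hc, hpow⟩ := neg_three_pow_two_pow j
  have htodd : Odd t := Nat.odd_iff.mpr (Nat.two_dvd_ne_zero.mp ht2)
  obtain ⟨e, he, hmain⟩ := odd_pow_one_add (j + 2) (by omega) c hc t htodd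
  have htpos : 0 < t := by
    rcases Nat.eq_zero_or_pos t with h | h
    · exfalso; exact ht2 (h ▸ dvd_zero 2)
    · exact h
  refine ⟨j, ?_, e, he, ?_⟩
  · calc 2 ^ j ≤ 2 ^ j * t := Nat.le_mul_of_pos_right _ htpos
      _ = d := hdt.symm
  · rw [hdt, pow_mul, hpow, hmain]; ring

private lemma odd_isCoprime_two_pow (s : ℕ) (x : ℤ) (hx : Odd x) : IsCoprime ((2:ℤ) ^ s) x := by
  apply IsCoprime.pow_left
  obtain ⟨j, hj⟩ := hx
  exact ⟨-j, 1, by rw [hj]; ring⟩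

private lemma neg_three_pow_inj (k : ℕ) (hk : 2 ≤ k) (n m : ℕ)
    (hn : n < 2 ^ (k - 1)) (hm : m < 2 ^ (k - 1))
    (h : (2:ℤ) ^ (k + 1) ∣ (-3) ^ n - (-3) ^ m) : n = m := by
  wlog hle : n ≤ m generalizing n m
  · exact (this m n hm hn ((dvd_sub_comm).mp h) (by omega)).symm
  · by_contra hne
    have hlt : n < m := lt_of_le_of_ne hle hne
    have hsplit : (-3:ℤ) ^ m = (-3) ^ n * (-3) ^ (m - n) := by
      rw [← pow_add]; congr 1; omega
    have h2 : (2:ℤ) ^ (k + 1) ∣ (-3:ℤ) ^ n * ((-3) ^ (m - n) - 1) := by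
      have : (-3:ℤ) ^ n * ((-3) ^ (m - n) - 1) = -((-3) ^ n - (-3) ^ m) := by
        rw [hsplit]; ring
      rw [this]; exact h.neg_right
    have hco : IsCoprime ((2:ℤ) ^ (k + 1)) ((-3) ^ n) :=
      odd_isCoprime_two_pow _ _ (Odd.pow ⟨-2, by norm_num⟩)
    have h3 : (2:ℤ) ^ (k + 1) ∣ (-3) ^ (m - n) - 1 := hco.dvd_of_dvd_mul_left h2
    obtain ⟨j, hj, e, he, heq⟩ := neg_three_pow_sub_one (m - n) (by omega)
    have hjk : j + 2 ≤ k := by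
      have h1 : 2 ^ j < 2 ^ (k - 1) := lt_of_le_of_lt hj (by omega)
      have := (Nat.pow_lt_pow_iff_right (a := 2) (by norm_num)).mp h1
      omega
    have h4 : (2:ℤ) ^ (j + 3) ∣ 2 ^ (j + 2) * e := by
      calc (2:ℤ) ^ (j + 3) ∣ 2 ^ (k + 1) := pow_dvd_pow 2 (by omega)
        _ ∣ _ := heq ▸ h3
    have h5 : (2:ℤ) ∣ e := by
      have hpos : (0:ℤ) < 2 ^ (j + 2) := by positivity
      obtain ⟨u, hu⟩ := h4
      refine ⟨u, ?_⟩
      have : (2:ℤ) ^ (j + 2) * e = 2 ^ (j + 2) * (2 * u) := by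
        rw [hu]; ring
      exact mul_left_cancel₀ hpos.ne' this
    obtain ⟨d, hd⟩ := he
    omega

private def Xseq : ℕ → ℤ
  | 0 => 0
  | (n+1) => 2 - 3 * Xseq n

private lemma Xseq_formula (n : ℕ) : 2 * Xseq n = 1 - (-3) ^ n := by
  induction n with
  | zero => simp [Xseq]
  | succ n ih => rw [Xseq, pow_succ]; ring_nf; ring_nf at ih; linarith

private lemma iter_eq (k : ℕ) (n : ℕ) :
    (fun x : ZMod (2 ^ k) => 2 + x - 2 * 2 * x)^[n] 0 = ((Xseq n : ℤ) : ZMod (2 ^ k)) := by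
  induction n with
  | zero => simp [Xseq]
  | succ n ih =>
    rw [Function.iterate_succ_apply', ih, Xseq]
    push_cast
    ring

-- parity infrastructure
private lemma even_or_odd_zmod (k : ℕ) (x : ZMod (2 ^ k)) [NeZero (2 ^ k)] :
    (∃ y, x = 2 * y) ∨ (∃ y, x = 2 * y + 1) := by
  have hx : ((x.val : ℕ) : ZMod (2 ^ k)) = x := by
    simp [ZMod.natCast_val, ZMod.cast_id]
  rcases Nat.even_or_odd x.val with ⟨c, hc⟩ | ⟨c, hc⟩
  · left; exact ⟨(c : ZMod (2^k)), by rw [← hx, hc]; push_cast; ring⟩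
  · right; exact ⟨(c : ZMod (2^k)), by rw [← hx, hc]; push_cast; ring⟩

private lemma not_even_and_odd_zmod (k : ℕ) (hk : 2 ≤ k) (x : ZMod (2 ^ k)) :
    ¬((∃ y, x = 2 * y) ∧ (∃ y, x = 2 * y + 1)) := by
  rintro ⟨⟨y, hy⟩, ⟨z, hz⟩⟩
  have hdvd : (2:ℕ) ∣ 2 ^ k := dvd_pow_self 2 (by omega)
  let φ : ZMod (2 ^ k) →+* ZMod 2 := ZMod.castHom hdvd (ZMod 2)
  have hφ2 : φ (2 : ZMod (2 ^ k)) = 0 := by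
    have : ((2:ℕ) : ZMod (2^k)) = (2 : ZMod (2^k)) := by push_cast; rfl
    rw [← this, map_natCast]
    decide
  have h1 : φ x = 0 := by rw [hy, map_mul, hφ2, zero_mul]
  have h2 : φ x = 1 := by rw [hz, map_add, map_mul, hφ2, zero_mul, zero_add, map_one]
  rw [h1] at h2
  exact absurd h2 (by decide)

private lemma Xseq_even (n : ℕ) : ∃ c : ℤ, Xseq n = 2 * c := by
  induction n with
  | zero => exact ⟨0, by simp [Xseq]⟩
  | succ n ih => obtain ⟨c, hc⟩ := ih; exact ⟨1 - 3 * c, by rw [Xseq, hc]; ring⟩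

private lemma odd_isUnit (k : ℕ) (hk : 2 ≤ k) (u : ZMod (2 ^ k)) (h : ∃ w, u = 2 * w + 1) :
    IsUnit u := by
  haveI : NeZero (2 ^ k) := ⟨pow_ne_zero k (by norm_num)⟩
  have hx : ((u.val : ℕ) : ZMod (2 ^ k)) = u := by
    simp [ZMod.natCast_val, ZMod.cast_id]
  rw [← hx]
  rw [ZMod.isUnit_iff_coprime]
  apply Nat.Coprime.pow_right
  refine ((Nat.Prime.coprime_iff_not_dvd Nat.prime_two).mpr ?_).symm
  intro hdvd
  obtain ⟨c, hc⟩ := hdvd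
  apply not_even_and_odd_zmod k hk u
  refine ⟨⟨(c : ZMod (2^k)), ?_⟩, h⟩
  rw [← hx, hc]; push_cast; ring

private lemma two_pow_zero (k : ℕ) (hk : 2 ≤ k) :
    (2 : ZMod (2 ^ k)) * 2 ^ (k - 1) = 0 := by
  have h : ((2 ^ k : ℕ) : ZMod (2 ^ k)) = 0 := ZMod.natCast_self _
  push_cast at h
  calc (2 : ZMod (2 ^ k)) * 2 ^ (k - 1) = 2 ^ ((k - 1) + 1) := by rw [pow_succ]; ring
    _ = 2 ^ k := by congr 1; omega
    _ = 0 := h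

private lemma part_b (k : ℕ) (hk : 2 ≤ k) :
    {a : ZMod (2 ^ k) | a + a - 2 * a * a = 0} =
      {0, 1, 2 ^ (k - 1), 2 ^ (k - 1) + 1} := by
  haveI : NeZero (2 ^ k) := ⟨pow_ne_zero k (by norm_num)⟩
  ext a
  simp only [Set.mem_setOf_eq, Set.mem_insert_iff, Set.mem_singleton_iff]
  constructor
  · intro h
    set z : ℤ := (a.val : ℤ) with hzdef
    have haz : ((z : ℤ) : ZMod (2 ^ k)) = a := by
      rw [hzdef]; push_cast; simp [ZMod.natCast_val, ZMod.cast_id]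
    have hz0 : 0 ≤ z := Int.natCast_nonneg _
    have hzlt : z < 2 ^ k := by
      rw [hzdef]; exact_mod_cast ZMod.val_lt a
    have hdvd : ((2:ℤ) ^ k) ∣ 2 * (z * (1 - z)) := by
      have hcast : (((2:ℕ) ^ k : ℕ) : ℤ) = (2:ℤ) ^ k := by push_cast; rfl
      rw [← hcast, ← ZMod.intCast_zmod_eq_zero_iff_dvd]
      push_cast
      rw [haz]
      linear_combination h
    have hdvd2 : ((2:ℤ) ^ (k - 1)) ∣ z * (1 - z) := by
      have h2 : (2:ℤ) ^ k = 2 * 2 ^ (k - 1) := by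
        rw [← pow_succ']; congr 1; omega
      rw [h2] at hdvd
      exact (mul_dvd_mul_iff_left (by norm_num : (2:ℤ) ≠ 0)).mp hdvd
    have hP : (0:ℤ) < 2 ^ (k - 1) := by positivity
    have hPk : (2:ℤ) ^ k = 2 ^ (k-1) * 2 := by rw [← pow_succ]; congr 1; omega
    rcases Int.even_or_odd z with ⟨c, hc⟩ | ⟨c, hc⟩
    · -- z even
      have hco : IsCoprime ((2:ℤ) ^ (k - 1)) (1 - z) :=
        odd_isCoprime_two_pow _ _ ⟨-c, by omega⟩
      obtain ⟨t, ht⟩ := hco.dvd_of_dvd_mul_right hdvd2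
      have ht2 : t = 0 ∨ t = 1 := by
        have h1 : 0 ≤ t := nonneg_of_mul_nonneg_right (by omega) hP
        have h2 : t < 2 := by
          have := hzlt; rw [ht, hPk] at this
          exact lt_of_mul_lt_mul_left (by linarith) (le_of_lt hP)
        omega
      rcases ht2 with rfl | rfl
      · left; rw [← haz, ht]; push_cast; ring
      · right; right; left; rw [← haz, ht]; push_cast; ring
    · -- z odd
      have hco : IsCoprime ((2:ℤ) ^ (k - 1)) z :=
        odd_isCoprime_two_pow _ _ ⟨c, by omega⟩
      have hd3 : (2:ℤ) ^ (k - 1) ∣ z - 1 := by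
        have h' := dvd_neg.mpr (hco.dvd_of_dvd_mul_left hdvd2)
        rwa [neg_sub] at h'
      obtain ⟨t, ht⟩ := hd3
      have ht2 : t = 0 ∨ t = 1 := by
        have h1 : 0 ≤ t := nonneg_of_mul_nonneg_right (by omega) hP
        have h2 : t < 2 := by
          have h3 : 2 ^ (k-1) * t < 2 ^ (k-1) * 2 := by rw [← ht, ← hPk]; omega
          exact lt_of_mul_lt_mul_left h3 (le_of_lt hP)
        omega
      rcases ht2 with rfl | rfl
      · right; left
        have hz1 : z = 1 := by omega
        rw [← haz, hz1]; push_cast; ring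
      · right; right; right
        have hz1 : z = 2 ^ (k-1) + 1 := by omega
        rw [← haz, hz1]; push_cast; ring
  · intro h
    have h2c := two_pow_zero k hk
    rcases h with rfl | rfl | rfl | rfl
    · ring
    · ring
    · linear_combination (1 - (2:ZMod (2^k)) ^ (k-1)) * h2c
    · linear_combination (-1 - (2:ZMod (2^k)) ^ (k-1)) * h2c

private lemma S2_iff (k : ℕ) (x : ZMod (2 ^ k)) :
    (∃ n : ℤ, x = n • (2 : ZMod (2 ^ k))) ↔ ∃ y, x = 2 * y := by
  constructor
  · rintro ⟨n, rfl⟩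
    exact ⟨(n : ZMod (2^k)), by rw [zsmul_eq_mul]; ring⟩
  · rintro ⟨y, rfl⟩
    obtain ⟨n, hn⟩ := ZMod.intCast_surjective (n := 2 ^ k) y
    exact ⟨n, by rw [← hn, zsmul_eq_mul]; ring⟩

private lemma S2_ncard (k : ℕ) (hk : 2 ≤ k) :
    {x : ZMod (2 ^ k) | ∃ y, x = 2 * y}.ncard = 2 ^ (k - 1) := by
  haveI : NeZero (2 ^ k) := ⟨pow_ne_zero k (by norm_num)⟩
  have hkk : 2 ^ k = 2 * 2 ^ (k - 1) := by
    rw [← pow_succ']; congr 1; omega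
  have hpos : 0 < 2 ^ (k - 1) := Nat.pow_pos (by norm_num)
  set f : Fin (2 ^ (k - 1)) → ZMod (2 ^ k) := fun i => ((2 * i.val : ℕ) : ZMod (2 ^ k)) with hf
  have hrange : {x : ZMod (2 ^ k) | ∃ y, x = 2 * y} = Set.range f := by
    ext x
    simp only [Set.mem_setOf_eq, Set.mem_range]
    constructor
    · rintro ⟨y, rfl⟩
      have hy : ((y.val : ℕ) : ZMod (2 ^ k)) = y := by
        simp [ZMod.natCast_val, ZMod.cast_id]
      obtain ⟨v, hv⟩ : ∃ v : ℕ, y.val = v := ⟨_, rfl⟩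
      refine ⟨⟨v % 2 ^ (k - 1), Nat.mod_lt _ hpos⟩, ?_⟩
      have h1 : 2 * v = 2 ^ k * (v / 2 ^ (k - 1)) + 2 * (v % 2 ^ (k - 1)) := by
        conv_lhs => rw [← Nat.div_add_mod v (2 ^ (k - 1))]
        rw [hkk]; ring
      show ((2 * (v % 2 ^ (k - 1)) : ℕ) : ZMod (2 ^ k)) = 2 * y
      have h0 : ((2 ^ k * (v / 2 ^ (k - 1)) : ℕ) : ZMod (2 ^ k)) = 0 := by
        rw [Nat.cast_mul, ZMod.natCast_self, zero_mul]
      have h2 : ((2 * v : ℕ) : ZMod (2 ^ k)) = ((2 * (v % 2 ^ (k - 1)) : ℕ) : ZMod (2 ^ k)) := by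
        rw [h1, Nat.cast_add, h0, zero_add]
      rw [← h2, ← hy, hv]
      push_cast
      ring
    · rintro ⟨i, rfl⟩
      exact ⟨((i.val : ℕ) : ZMod (2 ^ k)), by rw [hf]; push_cast; ring⟩
  have hinj : Function.Injective f := by
    intro i j hij
    have hi : (2 * i.val) < 2 ^ k := by omega
    have hj : (2 * j.val) < 2 ^ k := by omega
    have := congrArg ZMod.val hij
    rw [hf] at this
    simp only at this
    rw [ZMod.val_cast_of_lt hi, ZMod.val_cast_of_lt hj] at this
    exact Fin.ext (by omega)
  rw [hrange, ← Set.image_univ, Set.ncard_image_of_injective _ hinj, Set.ncard_univ,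
    Nat.card_eq_fintype_card, Fintype.card_fin]

private lemma part_c_surj (k : ℕ) (hk : 2 ≤ k) (x : ZMod (2 ^ k)) (hx : ∃ y, x = 2 * y) :
    ∃ n : ℕ, x = ((Xseq n : ℤ) : ZMod (2 ^ k)) := by
  haveI : NeZero (2 ^ k) := ⟨pow_ne_zero k (by norm_num)⟩
  set T : Finset (ZMod (2 ^ k)) :=
    (Finset.range (2 ^ (k - 1))).image (fun n => ((Xseq n : ℤ) : ZMod (2 ^ k))) with hT
  have hinj : Set.InjOn (fun n => ((Xseq n : ℤ) : ZMod (2 ^ k))) (Finset.range (2 ^ (k - 1))) := by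
    intro n hn m hm h
    simp only [Finset.coe_range, Set.mem_Iio] at hn hm
    simp only at h
    have hd : ((2 ^ k : ℕ) : ℤ) ∣ Xseq n - Xseq m := by
      rw [← ZMod.intCast_zmod_eq_zero_iff_dvd]
      push_cast
      simp [h]
    have hd2 : (2 : ℤ) ^ (k + 1) ∣ (-3) ^ m - (-3) ^ n := by
      have h1 : ((-3:ℤ) ^ m - (-3) ^ n) = 2 * (Xseq n - Xseq m) := by
        have e1 := Xseq_formula n
        have e2 := Xseq_formula m
        linarith
      rw [h1, pow_succ']
      apply mul_dvd_mul_left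
      exact_mod_cast hd
    exact (neg_three_pow_inj k hk m n hm hn hd2).symm
  have hcard : T.card = 2 ^ (k - 1) := by
    rw [hT, Finset.card_image_of_injOn hinj, Finset.card_range]
  have hsub : (↑T : Set (ZMod (2 ^ k))) ⊆ {x : ZMod (2 ^ k) | ∃ y, x = 2 * y} := by
    intro x hxT
    rw [hT] at hxT
    simp only [Finset.coe_image, Finset.coe_range, Set.mem_image, Set.mem_Iio] at hxT
    obtain ⟨n, _, rfl⟩ := hxT
    obtain ⟨c, hc⟩ := Xseq_even n
    exact ⟨((c : ℤ) : ZMod (2 ^ k)), by rw [hc]; push_cast; ring⟩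
  have heq : (↑T : Set (ZMod (2 ^ k))) = {x : ZMod (2 ^ k) | ∃ y, x = 2 * y} := by
    apply Set.eq_of_subset_of_ncard_le hsub
      (by rw [S2_ncard k hk, Set.ncard_coe_finset, hcard]) (Set.toFinite _)
  have hxT : x ∈ (↑T : Set (ZMod (2 ^ k))) := heq ▸ hx
  rw [hT] at hxT
  simp only [Finset.coe_image, Finset.coe_range, Set.mem_image, Set.mem_Iio] at hxT
  obtain ⟨n, _, hn⟩ := hxT
  exact ⟨n, hn.symm⟩

/-- structure of the brace `B_k` on `ℤ/2^kℤ` with `a ∘ b = a + b - 2ab`, `k ≥ 2`: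
(a) `{0,1}` and the even elements `⟨2⟩₊` are `∘`-subgroups and `(B_k,∘)` is their internal
direct product; (b) the elements of `∘`-order at most 2 are exactly `{0, 1, 2^(k-1), 2^(k-1)+1}`;
(c) `(⟨2⟩₊, ∘)` is cyclic of order `2^(k-1)`. -/
theorem structure_of_Bk (k : ℕ) (hk : 2 ≤ k) :
    let m : ZMod (2 ^ k) → ZMod (2 ^ k) → ZMod (2 ^ k) := fun a b => a + b - 2 * a * b
    let S1 : Set (ZMod (2 ^ k)) := {0, 1}
    let S2 : Set (ZMod (2 ^ k)) := {x | ∃ n : ℤ, x = n • (2 : ZMod (2 ^ k))}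
    -- (a) both are subgroups of (B_k, ∘) ...
    ((0 : ZMod (2 ^ k)) ∈ S1 ∧ (∀ a ∈ S1, ∀ b ∈ S1, m a b ∈ S1) ∧
      (∀ a ∈ S1, ∃ b ∈ S1, m a b = 0) ∧
     (0 : ZMod (2 ^ k)) ∈ S2 ∧ (∀ a ∈ S2, ∀ b ∈ S2, m a b ∈ S2) ∧
      (∀ a ∈ S2, ∃ b ∈ S2, m a b = 0) ∧
     -- ... and (B_k,∘) is the internal direct product of S1 and S2
     (∀ x : ZMod (2 ^ k), ∃! p : ZMod (2 ^ k) × ZMod (2 ^ k),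
        p.1 ∈ S1 ∧ p.2 ∈ S2 ∧ x = m p.1 p.2)) ∧
    -- (b) elements of multiplicative order ≤ 2
    ({a : ZMod (2 ^ k) | m a a = 0} =
      {0, 1, 2 ^ (k - 1), 2 ^ (k - 1) + 1}) ∧
    -- (c) (⟨2⟩₊, ∘) is cyclic of order 2^(k-1)
    (∃ g ∈ S2, (∀ x ∈ S2, ∃ n : ℕ, x = (m g)^[n] 0) ∧ S2.ncard = 2 ^ (k - 1)) := by
  intro m S1 S2
  haveI : NeZero (2 ^ k) := ⟨pow_ne_zero k (by norm_num)⟩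
  have hS2 : ∀ x : ZMod (2 ^ k), x ∈ S2 ↔ ∃ y, x = 2 * y := fun x => S2_iff k x
  have hS1 : ∀ x : ZMod (2 ^ k), x ∈ S1 ↔ x = 0 ∨ x = 1 := fun x => by
    simp [S1]
  refine ⟨⟨?_, ?_, ?_, ?_, ?_, ?_, ?_⟩, ?_, ?_⟩
  · exact Set.mem_insert _ _
  · intro a ha b hb
    rcases (hS1 a).mp ha with rfl | rfl <;> rcases (hS1 b).mp hb with rfl | rfl <;>
      rw [hS1] <;> simp only [m]
    · left; ring
    · right; ring
    · right; ring
    · left; ring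
  · intro a ha
    rcases (hS1 a).mp ha with rfl | rfl
    · exact ⟨0, Set.mem_insert _ _, by simp only [m]; ring⟩
    · exact ⟨1, (hS1 1).mpr (Or.inr rfl), by simp only [m]; ring⟩
  · exact (hS2 0).mpr ⟨0, by ring⟩
  · intro a ha b hb
    obtain ⟨y, rfl⟩ := (hS2 a).mp ha
    obtain ⟨z, rfl⟩ := (hS2 b).mp hb
    exact (hS2 _).mpr ⟨y + z - 4 * (y * z), by simp only [m]; ring⟩
  · intro a ha
    obtain ⟨y, hy⟩ := (hS2 a).mp ha
    have hu' : IsUnit (1 - 2 * a) := odd_isUnit k hk _ ⟨-(2 * y), by rw [hy]; ring⟩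
    obtain ⟨u, hu⟩ := hu'.exists_left_inv
    exact ⟨-(a * u), (hS2 _).mpr ⟨-(y * u), by rw [hy]; ring⟩,
      by simp only [m]; linear_combination (-a) * hu⟩
  · intro x
    rcases even_or_odd_zmod k x with ⟨y, hy⟩ | ⟨y, hy⟩
    · refine ⟨(0, x), ⟨Set.mem_insert _ _, (hS2 x).mpr ⟨y, hy⟩, by simp only [m]; ring⟩, ?_⟩
      rintro ⟨e, s⟩ ⟨he, hs, hx⟩
      obtain ⟨z, hz⟩ := (hS2 s).mp hs
      rcases (hS1 e).mp he with rfl | rfl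
      · have hsx : s = x := by rw [hx]; simp only [m]; ring
        rw [hsx]
      · exfalso
        apply not_even_and_odd_zmod k hk x
        exact ⟨⟨y, hy⟩, ⟨-z, by rw [hx, hz]; simp only [m]; ring⟩⟩
    · refine ⟨(1, 1 - x), ⟨(hS1 1).mpr (Or.inr rfl), (hS2 _).mpr ⟨-y, by rw [hy]; ring⟩,
        by simp only [m]; ring⟩, ?_⟩
      rintro ⟨e, s⟩ ⟨he, hs, hx⟩
      obtain ⟨z, hz⟩ := (hS2 s).mp hs
      rcases (hS1 e).mp he with rfl | rfl
      · exfalso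
        apply not_even_and_odd_zmod k hk x
        exact ⟨⟨z, by rw [hx, hz]; simp only [m]; ring⟩, ⟨y, hy⟩⟩
      · have hsx : s = 1 - x := by rw [hx]; simp only [m]; ring
        rw [hsx]
  · simp only [m]
    exact part_b k hk
  · refine ⟨2, (hS2 2).mpr ⟨1, by ring⟩, ?_, ?_⟩
    · intro x hx
      obtain ⟨n, hn⟩ := part_c_surj k hk x ((hS2 x).mp hx)
      refine ⟨n, ?_⟩
      rw [hn]
      have hm2 : m 2 = fun x : ZMod (2 ^ k) => 2 + x - 2 * 2 * x := rfl
      rw [hm2, iter_eq]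
    · rw [show S2 = {x : ZMod (2 ^ k) | ∃ y, x = 2 * y} from Set.ext hS2]
      exact S2_ncard k hk
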